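/- There exist a soliton graph G and a set B of bursts for G such that the soliton automaton A_B(G) is perfectly deterministic but not strongly deterministic. -/

import Mathlib

/- Formalization of multi-soliton automata (Bordihn–Schulz),
   following the definitions of the paper. -/

namespace Soliton

variable {V : Type}

/-- An undirected, loopless graph on node set `V`. -/
structure SGraph (V : Type) where
  adj : V → V → Prop
  symm : ∀ u v, adj u v → adj v u
  loopless : ∀ v, ¬ adj v v

/-- Degree of a node: the number of neighbours. -/
noncomputable def degree (G : SGraph V) (n : V) : ℕ := Nat.card {v // G.adj n v}

/-- An exterior node has degree 1. -/
def Exterior (G : SGraph V) (n : V) : Prop := degree G n = 1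

/-- An interior node has degree at least 2. -/
def Interior (G : SGraph V) (n : V) : Prop := 2 ≤ degree G n

/-- A weight function: symmetric, with weight in {1,2} exactly on edges and 0 elsewhere. -/
def IsWeighting (G : SGraph V) (w : V → V → ℕ) : Prop :=
  (∀ u v, w u v = w v u) ∧
  (∀ u v, G.adj u v → w u v = 1 ∨ w u v = 2) ∧
  (∀ u v, ¬ G.adj u v → w u v = 0)

/-- The weight of a node: sum of the weights of the incident edges. -/
noncomputable def nodeWeight (w : V → V → ℕ) (n : V) : ℕ := ∑ᶠ v, w n v

/-- A soliton graph: degrees between 1 and 3, node-weight conditions, and every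
component contains an exterior node. -/
def IsSolitonGraph (G : SGraph V) (w : V → V → ℕ) : Prop :=
  IsWeighting G w ∧
  (∀ n, 1 ≤ degree G n ∧ degree G n ≤ 3) ∧
  (∀ n, Exterior G n → nodeWeight w n = 1 ∨ nodeWeight w n = 2) ∧
  (∀ n, Interior G n → nodeWeight w n = degree G n + 1) ∧
  (∀ n, ∃ e, Exterior G e ∧ Relation.ReflTransGen G.adj n e)

/-- A burst `(n₁,n₁')‖_{k₁}(n₂,n₂')‖_{k₂}⋯(n_m,n_m')⊥`: each soliton `i` has an
entry node, an exit node, and a delay (the delay of the first soliton is 0). -/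
structure Burst (V : Type) where
  m : ℕ
  hm : 0 < m
  entry : Fin m → V
  exit : Fin m → V
  delay : Fin m → ℕ
  delay_zero : delay ⟨0, hm⟩ = 0

/-- A burst for a soliton graph: all entry and exit nodes are exterior. -/
def IsBurstFor (G : SGraph V) (b : Burst V) : Prop :=
  ∀ i, Exterior G (b.entry i) ∧ Exterior G (b.exit i)

/-- The arrival time of soliton `i`: the sum of the delays up to and including `i`. -/
def Burst.arrival (b : Burst V) (i : Fin b.m) : ℕ :=
  ∑ j ∈ Finset.univ.filter (fun j => j ≤ i), b.delay j

/-- The position of a soliton: `wait k` with `k ≥ 1` means `k` steps until entry,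
`wait 0` means the soliton has left the graph, and `node n` means it is at node `n`. -/
inductive SolPos (V : Type) where
  | wait : ℕ → SolPos V
  | node : V → SolPos V

/-- The initial position map of a burst. -/
def initPos (b : Burst V) : Fin b.m → SolPos V := fun i =>
  if b.arrival i = 0 then SolPos.node (b.entry i) else SolPos.wait (b.arrival i)

/-- A position map is final if every soliton has left the graph. -/
def IsFinal {m : ℕ} (π : Fin m → SolPos V) : Prop := ∀ i, π i = SolPos.wait 0

/-- A configuration: a weighting of the graph together with a position map. -/
abbrev Config (V : Type) (m : ℕ) := (V → V → ℕ) × (Fin m → SolPos V)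

/-- The one-step (potential successor) relation on the position of a single soliton:
waiting counters decrease, soliton `i` enters at its entry node, a soliton in the
graph moves to an adjacent node, and a soliton may leave only at its exit node. -/
def PosStep (G : SGraph V) (b : Burst V) (i : Fin b.m) (p p' : SolPos V) : Prop :=
  (p = SolPos.wait 0 ∧ p' = SolPos.wait 0) ∨
  (p = SolPos.wait 1 ∧ p' = SolPos.node (b.entry i)) ∨
  (∃ k : ℕ, p = SolPos.wait (k + 2) ∧ p' = SolPos.wait (k + 1)) ∨
  (∃ n : V, p = SolPos.node n ∧
    ((n = b.exit i ∧ p' = SolPos.wait 0) ∨ (∃ n', G.adj n n' ∧ p' = SolPos.node n')))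

/-- Some soliton moves from `p` to `q` in the step from `π` to `π'`. -/
def MovesAlong {m : ℕ} (π π' : Fin m → SolPos V) (p q : V) : Prop :=
  ∃ i, π i = SolPos.node p ∧ π' i = SolPos.node q

/-- The weight of a traversed edge changes from `w` to `3 - w`; all other
weights remain unchanged. -/
def WeightStep {m : ℕ} (w w' : V → V → ℕ) (π π' : Fin m → SolPos V) : Prop :=
  ∀ p q : V,
    ((MovesAlong π π' p q ∨ MovesAlong π π' q p) → w' p q = 3 - w p q) ∧
    (¬(MovesAlong π π' p q ∨ MovesAlong π π' q p) → w' p q = w p q)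

/-- A single step between configurations. -/
def StepOk (G : SGraph V) (b : Burst V) (c c' : Config V b.m) : Prop :=
  (∀ i, PosStep G b i (c.2 i) (c'.2 i)) ∧ WeightStep c.1 c'.1 c.2 c'.2

/-- The conditions of a configuration trail involving two consecutive steps
`c, c', c''`: a soliton that has just entered moves on into the graph; a soliton
reaching its exit node from inside the graph leaves; consecutive edges traversed
by a soliton have alternating weights; a soliton never immediately turns around. -/
def TwoStepOk (G : SGraph V) (b : Burst V) (c c' c'' : Config V b.m) : Prop :=
  ∀ i : Fin b.m,
    (∀ n : V, c'.2 i = SolPos.node n → Exterior G n → c.2 i = SolPos.wait 1 →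
      ∃ r, c''.2 i = SolPos.node r) ∧
    (c'.2 i = SolPos.node (b.exit i) → Exterior G (b.exit i) →
      (∃ p, c.2 i = SolPos.node p) → c''.2 i = SolPos.wait 0) ∧
    (∀ p q r : V, c.2 i = SolPos.node p → c'.2 i = SolPos.node q → Interior G q →
      c''.2 i = SolPos.node r → c.1 p q ≠ c'.1 q r) ∧
    (c''.2 i ≠ SolPos.wait 0 → c''.2 i ≠ c'.2 i ∧ c''.2 i ≠ c.2 i)

/-- A configuration trail for a soliton graph with weighting `w0` and a burst `b`. -/
def IsTrail (G : SGraph V) (w0 : V → V → ℕ) (b : Burst V) (len : ℕ)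
    (cfg : Fin (len + 1) → Config V b.m) : Prop :=
  (cfg 0).1 = w0 ∧ (cfg 0).2 = initPos b ∧
  (∀ (j : ℕ) (h : j < len), StepOk G b (cfg ⟨j, by omega⟩) (cfg ⟨j + 1, by omega⟩)) ∧
  (∀ (h : 1 ≤ len) (i : Fin b.m) (n : V), (cfg 0).2 i = SolPos.node n →
    ∃ n', (cfg ⟨1, by omega⟩).2 i = SolPos.node n') ∧
  (∀ (j : ℕ) (h : j + 2 ≤ len),
    TwoStepOk G b (cfg ⟨j, by omega⟩) (cfg ⟨j + 1, by omega⟩) (cfg ⟨j + 2, by omega⟩)) ∧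
  (∀ (j : ℕ) (h : j < len), ¬ IsFinal (cfg ⟨j, by omega⟩).2)

/-- The legality conditions between two consecutive configurations: two solitons
at the same node move to different nodes, and two solitons never traverse the
same edge in opposite directions in the same step. -/
def LegalStep {m : ℕ} (G : SGraph V) (c c' : Config V m) : Prop :=
  (∀ i i' : Fin m, i ≠ i' → ∀ n : V, c.2 i = SolPos.node n → c.2 i' = SolPos.node n →
    c'.2 i ≠ c'.2 i') ∧
  (∀ i i' : Fin m, i ≠ i' → ∀ p q : V, c.2 i = SolPos.node p → c.2 i' = SolPos.node q →
    G.adj p q → ¬(c'.2 i = SolPos.node q ∧ c'.2 i' = SolPos.node p))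

/-- A legal configuration trail. -/
def IsLegalTrail (G : SGraph V) (w0 : V → V → ℕ) (b : Burst V) (len : ℕ)
    (cfg : Fin (len + 1) → Config V b.m) : Prop :=
  IsTrail G w0 b len cfg ∧
  ∀ (j : ℕ) (h : j < len), LegalStep G (cfg ⟨j, by omega⟩) (cfg ⟨j + 1, by omega⟩)

/-- A total legal configuration trail: a legal trail whose last position map is final. -/
def IsTotalLegalTrail (G : SGraph V) (w0 : V → V → ℕ) (b : Burst V) (len : ℕ)
    (cfg : Fin (len + 1) → Config V b.m) : Prop :=
  IsLegalTrail G w0 b len cfg ∧ IsFinal (cfg (Fin.last len)).2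

/-- `Result(G, b)`: the set of weightings obtained as final graphs of total legal
configuration trails for `(G, w0)` and `b`. -/
def ResultSet (G : SGraph V) (w0 : V → V → ℕ) (b : Burst V) : Set (V → V → ℕ) :=
  {w' | ∃ (len : ℕ) (cfg : Fin (len + 1) → Config V b.m),
    IsTotalLegalTrail G w0 b len cfg ∧ (cfg (Fin.last len)).1 = w'}

/-- `States(G, B)`: the closure of `{w0}` under taking results of bursts in `B`. -/
inductive InStates (G : SGraph V) (w0 : V → V → ℕ) (B : Set (Burst V)) :
    (V → V → ℕ) → Prop
  | refl : InStates G w0 B w0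
  | step {w' w'' : V → V → ℕ} {b : Burst V} (h : InStates G w0 B w') (hb : b ∈ B)
      (hr : w'' ∈ ResultSet G w' b) : InStates G w0 B w''

/-- `States(G, B)` as a set. -/
def StatesSet (G : SGraph V) (w0 : V → V → ℕ) (B : Set (Burst V)) :
    Set (V → V → ℕ) := {w' | InStates G w0 B w'}

/-- The data of a configuration trail: a length together with a sequence of
configurations. -/
def TrailData (V : Type) (m : ℕ) := Σ len : ℕ, Fin (len + 1) → Config V m

/-- The trail data is a total legal configuration trail. -/
def IsTotalLegalTrailD (G : SGraph V) (w0 : V → V → ℕ) (b : Burst V)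
    (t : TrailData V b.m) : Prop :=
  IsTotalLegalTrail G w0 b t.1 t.2

/-- The soliton automaton `A_B(G)` is strongly deterministic: for every state and
burst there is at most one total legal configuration trail. -/
def StronglyDet (G : SGraph V) (w0 : V → V → ℕ) (B : Set (Burst V)) : Prop :=
  ∀ w', InStates G w0 B w' → ∀ b ∈ B, ∀ t t' : TrailData V b.m,
    IsTotalLegalTrailD G w' b t → IsTotalLegalTrailD G w' b t' → t = t'

/-- The prefix of length `i` of a sequence of configurations. -/
def prefixCfg {α : Type} {len : ℕ} (cfg : Fin (len + 1) → α) (i : ℕ) (h : i ≤ len) :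
    Fin (i + 1) → α := fun j => cfg ⟨j, by have := j.isLt; omega⟩

/-- `SC(C)`: the set of position maps by which the configuration trail `C` can be
extended by one configuration. -/
def SC (G : SGraph V) (w0 : V → V → ℕ) (b : Burst V) (len : ℕ)
    (cfg : Fin (len + 1) → Config V b.m) : Set (Fin b.m → SolPos V) :=
  {π' | ∃ wn : V → V → ℕ, IsTrail G w0 b (len + 1) (Fin.snoc cfg (wn, π'))}

/-- A configuration trail is perfect if no two of its configurations at distinct
positions are successor-equivalent (equal as configurations with equal sets of
possible successor position maps). -/
def IsPerfect (G : SGraph V) (w0 : V → V → ℕ) (b : Burst V) (len : ℕ)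
    (cfg : Fin (len + 1) → Config V b.m) : Prop :=
  ∀ (i j : ℕ) (hij : i < j) (hj : j ≤ len),
    ¬(cfg ⟨i, by omega⟩ = cfg ⟨j, by omega⟩ ∧
      SC G w0 b i (prefixCfg cfg i (by omega)) = SC G w0 b j (prefixCfg cfg j hj))

/-- The trail data is a perfect configuration trail. -/
def IsPerfectD (G : SGraph V) (w0 : V → V → ℕ) (b : Burst V)
    (t : TrailData V b.m) : Prop :=
  IsPerfect G w0 b t.1 t.2

/-- The soliton automaton `A_B(G)` is perfectly deterministic: for every state and
burst there is at most one perfect total legal configuration trail. -/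
def PerfectlyDet (G : SGraph V) (w0 : V → V → ℕ) (B : Set (Burst V)) : Prop :=
  ∀ w', InStates G w0 B w' → ∀ b ∈ B, ∀ t t' : TrailData V b.m,
    IsTotalLegalTrailD G w' b t → IsPerfectD G w' b t →
    IsTotalLegalTrailD G w' b t' → IsPerfectD G w' b t' → t = t'

/-- `g` is an upper bound on the amount of non-determinism of `A_B(G)`. -/
def DegreeBound (G : SGraph V) (w0 : V → V → ℕ) (B : Set (Burst V)) (g : ℕ) : Prop :=
  ∀ w', InStates G w0 B w' → ∀ b ∈ B, (ResultSet G w' b).ncard ≤ g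

/-- The degree of non-determinism of `A_B(G)` is `g`: the smallest integer `g ≥ 1`
with `|Result(G', b)| ≤ g` for all states `G'` and bursts `b ∈ B`. -/
def HasDegreeOfNondeterminism (G : SGraph V) (w0 : V → V → ℕ) (B : Set (Burst V))
    (g : ℕ) : Prop :=
  1 ≤ g ∧ DegreeBound G w0 B g ∧ ∀ g', 1 ≤ g' → DegreeBound G w0 B g' → g ≤ g'

/-- The edge `(u, v)` is used (in this direction) in the configuration trail `cfg`. -/
def UsedInTrail {m : ℕ} (len : ℕ) (cfg : Fin (len + 1) → Config V m) (u v : V) : Prop :=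
  ∃ (j : ℕ) (h : j < len) (i : Fin m),
    (cfg ⟨j, by omega⟩).2 i = SolPos.node u ∧ (cfg ⟨j + 1, by omega⟩).2 i = SolPos.node v

/-- An indecomposable soliton graph: it contains no impervious path, i.e. every
edge is used in some configuration trail of some state reachable with some set
of bursts. -/
def Indecomposable (G : SGraph V) (w0 : V → V → ℕ) : Prop :=
  ∀ u v, G.adj u v →
    ∃ B : Set (Burst V), (∀ b ∈ B, IsBurstFor G b) ∧
      ∃ w', InStates G w0 B w' ∧ ∃ b ∈ B, ∃ (len : ℕ) (cfg : Fin (len + 1) → Config V b.m),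
        IsTrail G w' b len cfg ∧ (UsedInTrail len cfg u v ∨ UsedInTrail len cfg v u)

/-- Walks of a given length in a graph. -/
inductive WalkLen (G : SGraph V) : V → V → ℕ → Prop
  | refl (v : V) : WalkLen G v v 0
  | tail {u v x : V} {n : ℕ} : WalkLen G u v n → G.adj v x → WalkLen G u x (n + 1)

/-- The graph is connected. -/
def ConnectedG (G : SGraph V) : Prop := ∀ u v, Relation.ReflTransGen G.adj u v

/-- The edge `(u, v)` is a bridge: removing it disconnects `u` from `v`. -/
def IsBridge (G : SGraph V) (u v : V) : Prop :=
  ¬ Relation.ReflTransGen (fun a c => G.adj a c ∧ ¬((a = u ∧ c = v) ∨ (a = v ∧ c = u))) u v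

/-- The underlying graph is a tree: connected and every edge is a bridge. -/
def IsTreeG (G : SGraph V) : Prop := ConnectedG G ∧ ∀ u v, G.adj u v → IsBridge G u v

/-- `(u, v)` is an edge of the cycle `cyc`. -/
def CycleEdge {L : ℕ} (cyc : ZMod (2 * L) → V) (u v : V) : Prop :=
  ∃ t, (u = cyc t ∧ v = cyc (t + 1)) ∨ (v = cyc t ∧ u = cyc (t + 1))

/-- The distance from a node to the cycle. -/
noncomputable def distToCycle (G : SGraph V) {L : ℕ} (cyc : ZMod (2 * L) → V)
    (n : V) : ℕ :=
  sInf {d | ∃ t, WalkLen G n (cyc t) d}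

/-- A chestnut with distinguished cycle `cyc` of even length `2L`: an
indecomposable soliton graph consisting of a single cycle of even length
together with paths leading into it, such that entry points of different paths
(nodes of degree 3 on the cycle) are at even distance along the cycle, and paths
leading to the cycle meet (at nodes of degree 3 off the cycle) only at even
distance from their entry into the cycle. -/
def IsChestnutWith (G : SGraph V) (w : V → V → ℕ) (L : ℕ)
    (cyc : ZMod (2 * L) → V) : Prop :=
  IsSolitonGraph G w ∧ Indecomposable G w ∧ 2 ≤ L ∧
  Function.Injective cyc ∧ (∀ t, G.adj (cyc t) (cyc (t + 1))) ∧ ConnectedG G ∧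
  (∀ u v, G.adj u v → ¬ CycleEdge cyc u v → IsBridge G u v) ∧
  (∀ s t : ZMod (2 * L), degree G (cyc s) = 3 → degree G (cyc t) = 3 →
    ∃ d, t = s + 2 * d) ∧
  (∀ n, (∀ t, n ≠ cyc t) → degree G n = 3 → Even (distToCycle G cyc n))

/-- A chestnut. -/
def IsChestnut (G : SGraph V) (w : V → V → ℕ) : Prop :=
  ∃ (L : ℕ) (cyc : ZMod (2 * L) → V), IsChestnutWith G w L cyc

/-- The burst `(x, y)⊥` of length 1. -/
def singleBurst (x y : V) : Burst V :=
  { m := 1, hm := one_pos, entry := fun _ => x, exit := fun _ => y,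
    delay := fun _ => 0, delay_zero := rfl }

/-- The burst `(e, e)‖₁(e, e)⊥` of length 2: two solitons enter and exit at `e`,
the second entering one time step after the first. -/
def doubleBurst (e : V) : Burst V :=
  { m := 2, hm := two_pos, entry := fun _ => e, exit := fun _ => e,
    delay := fun i => if (i : ℕ) = 0 then 0 else 1, delay_zero := rfl }


/-! ### Construction for Statement 11 -/

instance {V : Type} [DecidableEq V] : DecidableEq (SolPos V) := fun a b =>
  match a, b with
  | .wait m, .wait n =>
    if h : m = n then .isTrue (by rw [h]) else .isFalse (by simp [h])
  | .wait _, .node _ => .isFalse (by simp)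
  | .node _, .wait _ => .isFalse (by simp)
  | .node x, .node y =>
    if h : x = y then .isTrue (by rw [h]) else .isFalse (by simp [h])

/-- Adjacency matrix of the chestnut: nodes e=0, j=1, a=2, b=3, c=4. -/
def adjM : Fin 5 → Fin 5 → Bool :=
  ![![false, true, false, false, false],
    ![true, false, true, false, true],
    ![false, true, false, true, false],
    ![false, false, true, false, true],
    ![false, true, false, true, false]]

def G5 : SGraph (Fin 5) where
  adj u v := adjM u v = true
  symm := by decide
  loopless := by decide

instance : DecidableRel G5.adj := fun u v => by unfold G5; infer_instance

lemma degree_eq5 (n : Fin 5) :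
    degree G5 n = (Finset.univ.filter fun v => G5.adj n v).card := by
  rw [degree, Nat.card_eq_fintype_card, Fintype.card_subtype]

lemma degree_G5 : ∀ n, degree G5 n = ![1,3,2,2,2] n := by
  intro n; rw [degree_eq5]; fin_cases n <;> decide

lemma exterior_iff (n : Fin 5) : Exterior G5 n ↔ n = 0 := by
  unfold Exterior; rw [degree_G5]; fin_cases n <;> simp

lemma interior_iff (n : Fin 5) : Interior G5 n ↔ n ≠ 0 := by
  unfold Interior; rw [degree_G5]; fin_cases n <;> simp

instance : DecidablePred (Exterior G5) := fun n =>
  decidable_of_iff (n = 0) (exterior_iff n).symm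
instance : DecidablePred (Interior G5) := fun n =>
  decidable_of_iff (n ≠ 0) (interior_iff n).symm

/-- Symmetric weight function from the five edge weights (ej, ja, ab, bc, cj). -/
def Wm (ej ja ab bc cj : ℕ) : Fin 5 → Fin 5 → ℕ :=
  ![![0, ej, 0, 0, 0],
    ![ej, 0, ja, 0, cj],
    ![0, ja, 0, ab, 0],
    ![0, 0, ab, 0, bc],
    ![0, cj, 0, bc, 0]]

def w₀ : Fin 5 → Fin 5 → ℕ := Wm 1 1 2 1 2
def w₁ : Fin 5 → Fin 5 → ℕ := Wm 1 2 1 2 1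

lemma nodeWeight_eq (w : Fin 5 → Fin 5 → ℕ) (n : Fin 5) :
    nodeWeight w n = ∑ v, w n v := by
  rw [nodeWeight, finsum_eq_sum_of_fintype]

lemma solitonGraph_w₀ : IsSolitonGraph G5 w₀ := by
  refine ⟨⟨by decide, by decide, by decide⟩, ?_, ?_, ?_, ?_⟩
  · intro n; rw [degree_G5]; fin_cases n <;> simp
  · intro n hn; rw [exterior_iff] at hn; subst hn
    rw [nodeWeight_eq]; decide
  · intro n hn; rw [interior_iff] at hn; rw [nodeWeight_eq, degree_G5]
    fin_cases n
    · exact absurd rfl hn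
    all_goals decide
  · intro n
    refine ⟨0, (exterior_iff 0).mpr rfl, ?_⟩
    fin_cases n
    · exact .refl
    · exact .single (by decide)
    · exact .head (by decide : G5.adj 2 1) (.single (by decide))
    · exact .head (by decide : G5.adj 3 2)
        (.head (by decide : G5.adj 2 1) (.single (by decide)))
    · exact .head (by decide : G5.adj 4 1) (.single (by decide))

/-- The double burst at node e = 0. -/
def bb : Burst (Fin 5) := doubleBurst 0

lemma bb_m : bb.m = 2 := rfl

lemma initPos_bb : initPos bb = ![SolPos.node 0, SolPos.wait 1] := by
  funext i
  have h0 : bb.arrival ⟨0, by decide⟩ = 0 := by decide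
  have h1 : bb.arrival ⟨1, by decide⟩ = 1 := by decide
  fin_cases i
  · simp [initPos, h0]; rfl
  · simp [initPos, h1]; rfl

lemma posStep_wait0 (i : Fin bb.m) (p' : SolPos (Fin 5)) :
    PosStep G5 bb i (.wait 0) p' ↔ p' = .wait 0 := by
  simp [PosStep]
lemma posStep_wait1 (i : Fin bb.m) (p' : SolPos (Fin 5)) :
    PosStep G5 bb i (.wait 1) p' ↔ p' = .node (bb.entry i) := by
  simp [PosStep]
lemma posStep_wait2 (i : Fin bb.m) (k : ℕ) (p' : SolPos (Fin 5)) :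
    PosStep G5 bb i (.wait (k+2)) p' ↔ p' = .wait (k+1) := by
  simp [PosStep]
lemma posStep_node (i : Fin bb.m) (n : Fin 5) (p' : SolPos (Fin 5)) :
    PosStep G5 bb i (.node n) p' ↔
      ((n = bb.exit i ∧ p' = .wait 0) ∨ ∃ n', G5.adj n n' ∧ p' = .node n') := by
  simp [PosStep]

set_option synthInstance.maxSize 1024 in
set_option synthInstance.maxHeartbeats 1000000 in
instance (i : Fin bb.m) (p p' : SolPos (Fin 5)) : Decidable (PosStep G5 bb i p p') :=
  match p with
  | .wait 0 => decidable_of_iff _ (posStep_wait0 i p').symm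
  | .wait 1 => decidable_of_iff _ (posStep_wait1 i p').symm
  | .wait (_+2) => decidable_of_iff _ (posStep_wait2 i _ p').symm
  | .node n => decidable_of_iff _ (posStep_node i n p').symm

set_option synthInstance.maxSize 1024 in
set_option synthInstance.maxHeartbeats 1000000 in
instance {m : ℕ} (π π' : Fin m → SolPos (Fin 5)) (p q : Fin 5) :
    Decidable (MovesAlong π π' p q) := by unfold MovesAlong; infer_instance

set_option synthInstance.maxSize 1024 in
set_option synthInstance.maxHeartbeats 1000000 in
instance {m : ℕ} (w w' : Fin 5 → Fin 5 → ℕ) (π π' : Fin m → SolPos (Fin 5)) :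
    Decidable (WeightStep w w' π π') := by unfold WeightStep; infer_instance

set_option synthInstance.maxSize 1024 in
set_option synthInstance.maxHeartbeats 1000000 in
instance (c c' : Config (Fin 5) bb.m) : Decidable (StepOk G5 bb c c') := by
  unfold StepOk; infer_instance

set_option synthInstance.maxSize 1024 in
set_option synthInstance.maxHeartbeats 1000000 in
instance {m : ℕ} (c c' : Config (Fin 5) m) : Decidable (LegalStep G5 c c') := by
  unfold LegalStep; infer_instance

set_option synthInstance.maxSize 1024 in
set_option synthInstance.maxHeartbeats 1000000 in
instance (c c' c'' : Config (Fin 5) 2) : Decidable (TwoStepOk G5 bb c c' c'') := by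
  unfold TwoStepOk; infer_instance

set_option synthInstance.maxSize 1024 in
set_option synthInstance.maxHeartbeats 1000000 in
instance (c c' c'' : Config (Fin 5) bb.m) : Decidable (TwoStepOk G5 bb c c' c'') := by
  unfold TwoStepOk; infer_instance

set_option synthInstance.maxSize 1024 in
set_option synthInstance.maxHeartbeats 1000000 in
instance {m : ℕ} (π : Fin m → SolPos (Fin 5)) : Decidable (IsFinal π) := by
  unfold IsFinal; infer_instance

instance decidableBallAdd2 (len : ℕ) (P : ∀ j : ℕ, j + 2 ≤ len → Prop)
    [I : ∀ j h, Decidable (P j h)] : Decidable (∀ j h, P j h) :=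
  decidable_of_iff (∀ (j : ℕ) (h : j < len), ∀ (h2 : j + 2 ≤ len), P j h2)
    ⟨fun H j h2 => H j (by omega) h2, fun H j _ h2 => H j h2⟩

set_option synthInstance.maxSize 1024 in
set_option synthInstance.maxHeartbeats 1000000 in
instance (w0 : Fin 5 → Fin 5 → ℕ) (len : ℕ) (cfg : Fin (len+1) → Config (Fin 5) bb.m) :
    Decidable (IsTrail G5 w0 bb len cfg) := by
  unfold IsTrail; infer_instance

set_option synthInstance.maxSize 1024 in
set_option synthInstance.maxHeartbeats 1000000 in
instance (w0 : Fin 5 → Fin 5 → ℕ) (len : ℕ) (cfg : Fin (len+1) → Config (Fin 5) bb.m) :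
    Decidable (IsTotalLegalTrail G5 w0 bb len cfg) := by
  unfold IsTotalLegalTrail IsLegalTrail; infer_instance

/-- positions along the canonical trail from w₀ -/
def pn (x : Fin 5) : SolPos (Fin 5) := SolPos.node x
def pw (k : ℕ) : SolPos (Fin 5) := SolPos.wait k

def T11 : Fin 12 → Config (Fin 5) bb.m :=
  ![(Wm 1 1 2 1 2, ![pn 0, pw 1]),
    (Wm 2 1 2 1 2, ![pn 1, pn 0]),
    (Wm 1 1 2 1 1, ![pn 4, pn 1]),
    (Wm 1 1 2 2 2, ![pn 3, pn 4]),
    (Wm 1 1 1 1 2, ![pn 2, pn 3]),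
    (Wm 1 2 2 1 2, ![pn 1, pn 2]),
    (Wm 1 1 2 1 1, ![pn 4, pn 1]),
    (Wm 2 1 2 2 1, ![pn 3, pn 0]),
    (Wm 2 1 1 2 1, ![pn 2, pw 0]),
    (Wm 2 2 1 2 1, ![pn 1, pw 0]),
    (Wm 1 2 1 2 1, ![pn 0, pw 0]),
    (Wm 1 2 1 2 1, ![pw 0, pw 0])]

set_option maxRecDepth 10000 in
lemma T11_total : IsTotalLegalTrail G5 w₀ bb 11 T11 := by decide

/-- Candidate next positions for one soliton. -/
def opts (p : SolPos (Fin 5)) : List (SolPos (Fin 5)) :=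
  match p with
  | .wait 0 => [.wait 0]
  | .wait 1 => [.node 0]
  | .wait (k+2) => [.wait (k+1)]
  | .node n => (if n = 0 then [.wait 0] else []) ++
      ((List.finRange 5).filter (fun v => adjM n v)).map .node

lemma posStep_mem {i : Fin bb.m} {p p' : SolPos (Fin 5)} (h : PosStep G5 bb i p p') :
    p' ∈ opts p := by
  match p with
  | .wait 0 => rw [posStep_wait0] at h; simp [opts, h]
  | .wait 1 => rw [posStep_wait1] at h; simp [opts, h]; rfl
  | .wait (k+2) => rw [posStep_wait2] at h; simp [opts, h]
  | .node n =>
    rw [posStep_node] at h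
    rcases h with ⟨h1, h2⟩ | ⟨n', ha, h2⟩
    · have : n = 0 := h1
      simp [opts, this, h2]
    · subst h2
      simp only [opts, List.mem_append, List.mem_map]
      right
      exact ⟨n', by simp only [List.mem_filter, List.mem_finRange, true_and]; exact ha, rfl⟩

def allCands (π : Fin 2 → SolPos (Fin 5)) : List (Fin 2 → SolPos (Fin 5)) :=
  (opts (π 0)).flatMap (fun x => (opts (π 1)).map (fun y => ![x, y]))

def flipW (w : Fin 5 → Fin 5 → ℕ) (π π' : Fin 2 → SolPos (Fin 5)) :
    Fin 5 → Fin 5 → ℕ :=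
  fun p q => if MovesAlong π π' p q ∨ MovesAlong π π' q p then 3 - w p q else w p q

lemma weight_flipW {w w' : Fin 5 → Fin 5 → ℕ} {π π' : Fin 2 → SolPos (Fin 5)}
    (hw : WeightStep w w' π π') : w' = flipW w π π' := by
  funext p q
  rcases hw p q with ⟨h1, h2⟩
  unfold flipW; split_ifs with h
  · exact h1 h
  · exact h2 h

lemma step_options (c1 c2 : Config (Fin 5) 2) (h : StepOk G5 bb c1 c2) :
    ∃ π' ∈ allCands c1.2, c2.2 = π' ∧ c2.1 = flipW c1.1 c1.2 c2.2 := by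
  refine ⟨c2.2, ?_, rfl, weight_flipW h.2⟩
  have he : c2.2 = ![c2.2 0, c2.2 1] := by
    funext i; fin_cases i <;> rfl
  rw [he]
  simp only [allCands, List.mem_flatMap, List.mem_map]
  have hp : ∀ i : Fin 2, PosStep G5 bb i (c1.2 i) (c2.2 i) := h.1
  exact ⟨c2.2 0, posStep_mem (hp 0), c2.2 1, posStep_mem (hp 1), rfl⟩


def D0 : Config (Fin 5) 2 := (Wm 1 1 2 1 2, ![pn 0, pw 1])
def D1 : Config (Fin 5) 2 := (Wm 2 1 2 1 2, ![pn 1, pn 0])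
def D2 : Config (Fin 5) 2 := (Wm 1 1 2 1 1, ![pn 4, pn 1])
def D3 : Config (Fin 5) 2 := (Wm 1 2 2 2 1, ![pn 3, pn 2])
def D4 : Config (Fin 5) 2 := (Wm 1 1 2 2 2, ![pn 3, pn 4])
def D5 : Config (Fin 5) 2 := (Wm 1 1 1 1 2, ![pn 2, pn 3])
def D6 : Config (Fin 5) 2 := (Wm 1 2 2 1 2, ![pn 1, pn 2])
def D7 : Config (Fin 5) 2 := (Wm 2 1 2 2 1, ![pn 3, pn 0])
def D8 : Config (Fin 5) 2 := (Wm 2 1 1 2 1, ![pn 2, pw 0])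
def D9 : Config (Fin 5) 2 := (Wm 2 2 1 2 1, ![pn 1, pw 0])
def D10 : Config (Fin 5) 2 := (Wm 1 2 1 2 1, ![pn 0, pw 0])
def D11 : Config (Fin 5) 2 := (Wm 1 2 1 2 1, ![pw 0, pw 0])

lemma step_Dstart (c2 : Config (Fin 5) 2) (hstep : StepOk G5 bb D0 c2)
    (hmv : ∀ (i : Fin bb.m) (n : Fin 5), D0.2 i = SolPos.node n → ∃ n', c2.2 i = SolPos.node n')
    (hleg : LegalStep G5 D0 c2) : c2 = D1 := by
  obtain ⟨c2w, c2p⟩ := c2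
  obtain ⟨π', hmem, h2, h1⟩ := step_options _ _ hstep
  simp only at h2 h1
  subst h2; subst h1
  fin_cases hmem <;>
    first
      | decide
      | exact absurd hmv (by decide)
      | exact absurd hleg (by decide)

lemma step_D0_D1 (c2 : Config (Fin 5) 2) (hstep : StepOk G5 bb D1 c2)
    (htwo : TwoStepOk G5 bb D0 D1 c2) (hleg : LegalStep G5 D1 c2) :
    c2 = D2 := by
  obtain ⟨c2w, c2p⟩ := c2
  obtain ⟨π', hmem, h2, h1⟩ := step_options _ _ hstep
  simp only at h2 h1
  subst h2; subst h1
  fin_cases hmem <;>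
    first
      | decide
      | exact absurd htwo (by decide)
      | exact absurd hleg (by decide)

lemma step_D1_D2 (c2 : Config (Fin 5) 2) (hstep : StepOk G5 bb D2 c2)
    (htwo : TwoStepOk G5 bb D1 D2 c2) (hleg : LegalStep G5 D2 c2) :
    c2 = D3 ∨ c2 = D4 := by
  obtain ⟨c2w, c2p⟩ := c2
  obtain ⟨π', hmem, h2, h1⟩ := step_options _ _ hstep
  simp only at h2 h1
  subst h2; subst h1
  fin_cases hmem <;>
    first
      | decide
      | exact absurd htwo (by decide)
      | exact absurd hleg (by decide)

lemma step_D2_D4 (c2 : Config (Fin 5) 2) (hstep : StepOk G5 bb D4 c2)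
    (htwo : TwoStepOk G5 bb D2 D4 c2) (hleg : LegalStep G5 D4 c2) :
    c2 = D5 := by
  obtain ⟨c2w, c2p⟩ := c2
  obtain ⟨π', hmem, h2, h1⟩ := step_options _ _ hstep
  simp only at h2 h1
  subst h2; subst h1
  fin_cases hmem <;>
    first
      | decide
      | exact absurd htwo (by decide)
      | exact absurd hleg (by decide)

lemma step_D4_D5 (c2 : Config (Fin 5) 2) (hstep : StepOk G5 bb D5 c2)
    (htwo : TwoStepOk G5 bb D4 D5 c2) (hleg : LegalStep G5 D5 c2) :
    c2 = D6 := by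
  obtain ⟨c2w, c2p⟩ := c2
  obtain ⟨π', hmem, h2, h1⟩ := step_options _ _ hstep
  simp only at h2 h1
  subst h2; subst h1
  fin_cases hmem <;>
    first
      | decide
      | exact absurd htwo (by decide)
      | exact absurd hleg (by decide)

lemma step_D5_D6 (c2 : Config (Fin 5) 2) (hstep : StepOk G5 bb D6 c2)
    (htwo : TwoStepOk G5 bb D5 D6 c2) (hleg : LegalStep G5 D6 c2) :
    c2 = D2 := by
  obtain ⟨c2w, c2p⟩ := c2
  obtain ⟨π', hmem, h2, h1⟩ := step_options _ _ hstep
  simp only at h2 h1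
  subst h2; subst h1
  fin_cases hmem <;>
    first
      | decide
      | exact absurd htwo (by decide)
      | exact absurd hleg (by decide)

lemma step_D6_D2 (c2 : Config (Fin 5) 2) (hstep : StepOk G5 bb D2 c2)
    (htwo : TwoStepOk G5 bb D6 D2 c2) (hleg : LegalStep G5 D2 c2) :
    c2 = D7 ∨ c2 = D4 := by
  obtain ⟨c2w, c2p⟩ := c2
  obtain ⟨π', hmem, h2, h1⟩ := step_options _ _ hstep
  simp only at h2 h1
  subst h2; subst h1
  fin_cases hmem <;>
    first
      | decide
      | exact absurd htwo (by decide)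
      | exact absurd hleg (by decide)

lemma step_D2_D7 (c2 : Config (Fin 5) 2) (hstep : StepOk G5 bb D7 c2)
    (htwo : TwoStepOk G5 bb D2 D7 c2) (hleg : LegalStep G5 D7 c2) :
    c2 = D8 := by
  obtain ⟨c2w, c2p⟩ := c2
  obtain ⟨π', hmem, h2, h1⟩ := step_options _ _ hstep
  simp only at h2 h1
  subst h2; subst h1
  fin_cases hmem <;>
    first
      | decide
      | exact absurd htwo (by decide)
      | exact absurd hleg (by decide)

lemma step_D7_D8 (c2 : Config (Fin 5) 2) (hstep : StepOk G5 bb D8 c2)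
    (htwo : TwoStepOk G5 bb D7 D8 c2) (hleg : LegalStep G5 D8 c2) :
    c2 = D9 := by
  obtain ⟨c2w, c2p⟩ := c2
  obtain ⟨π', hmem, h2, h1⟩ := step_options _ _ hstep
  simp only at h2 h1
  subst h2; subst h1
  fin_cases hmem <;>
    first
      | decide
      | exact absurd htwo (by decide)
      | exact absurd hleg (by decide)

lemma step_D8_D9 (c2 : Config (Fin 5) 2) (hstep : StepOk G5 bb D9 c2)
    (htwo : TwoStepOk G5 bb D8 D9 c2) (hleg : LegalStep G5 D9 c2) :
    c2 = D10 := by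
  obtain ⟨c2w, c2p⟩ := c2
  obtain ⟨π', hmem, h2, h1⟩ := step_options _ _ hstep
  simp only at h2 h1
  subst h2; subst h1
  fin_cases hmem <;>
    first
      | decide
      | exact absurd htwo (by decide)
      | exact absurd hleg (by decide)

lemma step_D9_D10 (c2 : Config (Fin 5) 2) (hstep : StepOk G5 bb D10 c2)
    (htwo : TwoStepOk G5 bb D9 D10 c2) (hleg : LegalStep G5 D10 c2) :
    c2 = D11 := by
  obtain ⟨c2w, c2p⟩ := c2
  obtain ⟨π', hmem, h2, h1⟩ := step_options _ _ hstep
  simp only at h2 h1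
  subst h2; subst h1
  fin_cases hmem <;>
    first
      | decide
      | exact absurd htwo (by decide)
      | exact absurd hleg (by decide)

lemma step_D2_D3 (c2 : Config (Fin 5) 2) (hstep : StepOk G5 bb D3 c2)
    (htwo : TwoStepOk G5 bb D2 D3 c2) (hleg : LegalStep G5 D3 c2) :
    False := by
  obtain ⟨c2w, c2p⟩ := c2
  obtain ⟨π', hmem, h2, h1⟩ := step_options _ _ hstep
  simp only at h2 h1
  subst h2; subst h1
  fin_cases hmem <;>
    first
      | decide
      | exact absurd htwo (by decide)
      | exact absurd hleg (by decide)

def Ee0 : Config (Fin 5) 2 := (Wm 1 2 1 2 1, ![pn 0, pw 1])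
def Ee1 : Config (Fin 5) 2 := (Wm 2 2 1 2 1, ![pn 1, pn 0])
def Ee2 : Config (Fin 5) 2 := (Wm 1 1 1 2 1, ![pn 2, pn 1])
def Ee3 : Config (Fin 5) 2 := (Wm 1 2 2 2 1, ![pn 3, pn 2])
def Ee4 : Config (Fin 5) 2 := (Wm 1 1 2 2 2, ![pn 3, pn 4])
def Ee5 : Config (Fin 5) 2 := (Wm 1 2 1 1 1, ![pn 4, pn 3])
def Ee6 : Config (Fin 5) 2 := (Wm 1 2 1 2 2, ![pn 1, pn 4])
def Ee7 : Config (Fin 5) 2 := (Wm 2 1 2 2 1, ![pn 3, pn 0])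
def Ee8 : Config (Fin 5) 2 := (Wm 2 1 2 1 1, ![pn 4, pw 0])
def Ee9 : Config (Fin 5) 2 := (Wm 2 1 2 1 2, ![pn 1, pw 0])
def Ee10 : Config (Fin 5) 2 := (Wm 1 1 2 1 2, ![pn 0, pw 0])
def Ee11 : Config (Fin 5) 2 := (Wm 1 1 2 1 2, ![pw 0, pw 0])

lemma step_Eestart (c2 : Config (Fin 5) 2) (hstep : StepOk G5 bb Ee0 c2)
    (hmv : ∀ (i : Fin bb.m) (n : Fin 5), Ee0.2 i = SolPos.node n → ∃ n', c2.2 i = SolPos.node n')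
    (hleg : LegalStep G5 Ee0 c2) : c2 = Ee1 := by
  obtain ⟨c2w, c2p⟩ := c2
  obtain ⟨π', hmem, h2, h1⟩ := step_options _ _ hstep
  simp only at h2 h1
  subst h2; subst h1
  fin_cases hmem <;>
    first
      | decide
      | exact absurd hmv (by decide)
      | exact absurd hleg (by decide)

lemma step_Ee0_Ee1 (c2 : Config (Fin 5) 2) (hstep : StepOk G5 bb Ee1 c2)
    (htwo : TwoStepOk G5 bb Ee0 Ee1 c2) (hleg : LegalStep G5 Ee1 c2) :
    c2 = Ee2 := by
  obtain ⟨c2w, c2p⟩ := c2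
  obtain ⟨π', hmem, h2, h1⟩ := step_options _ _ hstep
  simp only at h2 h1
  subst h2; subst h1
  fin_cases hmem <;>
    first
      | decide
      | exact absurd htwo (by decide)
      | exact absurd hleg (by decide)

lemma step_Ee1_Ee2 (c2 : Config (Fin 5) 2) (hstep : StepOk G5 bb Ee2 c2)
    (htwo : TwoStepOk G5 bb Ee1 Ee2 c2) (hleg : LegalStep G5 Ee2 c2) :
    c2 = Ee3 ∨ c2 = Ee4 := by
  obtain ⟨c2w, c2p⟩ := c2
  obtain ⟨π', hmem, h2, h1⟩ := step_options _ _ hstep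
  simp only at h2 h1
  subst h2; subst h1
  fin_cases hmem <;>
    first
      | decide
      | exact absurd htwo (by decide)
      | exact absurd hleg (by decide)

lemma step_Ee2_Ee4 (c2 : Config (Fin 5) 2) (hstep : StepOk G5 bb Ee4 c2)
    (htwo : TwoStepOk G5 bb Ee2 Ee4 c2) (hleg : LegalStep G5 Ee4 c2) :
    False := by
  obtain ⟨c2w, c2p⟩ := c2
  obtain ⟨π', hmem, h2, h1⟩ := step_options _ _ hstep
  simp only at h2 h1
  subst h2; subst h1
  fin_cases hmem <;>
    first
      | decide
      | exact absurd htwo (by decide)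
      | exact absurd hleg (by decide)

lemma step_Ee2_Ee3 (c2 : Config (Fin 5) 2) (hstep : StepOk G5 bb Ee3 c2)
    (htwo : TwoStepOk G5 bb Ee2 Ee3 c2) (hleg : LegalStep G5 Ee3 c2) :
    c2 = Ee5 := by
  obtain ⟨c2w, c2p⟩ := c2
  obtain ⟨π', hmem, h2, h1⟩ := step_options _ _ hstep
  simp only at h2 h1
  subst h2; subst h1
  fin_cases hmem <;>
    first
      | decide
      | exact absurd htwo (by decide)
      | exact absurd hleg (by decide)

lemma step_Ee3_Ee5 (c2 : Config (Fin 5) 2) (hstep : StepOk G5 bb Ee5 c2)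
    (htwo : TwoStepOk G5 bb Ee3 Ee5 c2) (hleg : LegalStep G5 Ee5 c2) :
    c2 = Ee6 := by
  obtain ⟨c2w, c2p⟩ := c2
  obtain ⟨π', hmem, h2, h1⟩ := step_options _ _ hstep
  simp only at h2 h1
  subst h2; subst h1
  fin_cases hmem <;>
    first
      | decide
      | exact absurd htwo (by decide)
      | exact absurd hleg (by decide)

lemma step_Ee5_Ee6 (c2 : Config (Fin 5) 2) (hstep : StepOk G5 bb Ee6 c2)
    (htwo : TwoStepOk G5 bb Ee5 Ee6 c2) (hleg : LegalStep G5 Ee6 c2) :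
    c2 = Ee2 := by
  obtain ⟨c2w, c2p⟩ := c2
  obtain ⟨π', hmem, h2, h1⟩ := step_options _ _ hstep
  simp only at h2 h1
  subst h2; subst h1
  fin_cases hmem <;>
    first
      | decide
      | exact absurd htwo (by decide)
      | exact absurd hleg (by decide)

lemma step_Ee6_Ee2 (c2 : Config (Fin 5) 2) (hstep : StepOk G5 bb Ee2 c2)
    (htwo : TwoStepOk G5 bb Ee6 Ee2 c2) (hleg : LegalStep G5 Ee2 c2) :
    c2 = Ee7 ∨ c2 = Ee3 := by
  obtain ⟨c2w, c2p⟩ := c2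
  obtain ⟨π', hmem, h2, h1⟩ := step_options _ _ hstep
  simp only at h2 h1
  subst h2; subst h1
  fin_cases hmem <;>
    first
      | decide
      | exact absurd htwo (by decide)
      | exact absurd hleg (by decide)

lemma step_Ee2_Ee7 (c2 : Config (Fin 5) 2) (hstep : StepOk G5 bb Ee7 c2)
    (htwo : TwoStepOk G5 bb Ee2 Ee7 c2) (hleg : LegalStep G5 Ee7 c2) :
    c2 = Ee8 := by
  obtain ⟨c2w, c2p⟩ := c2
  obtain ⟨π', hmem, h2, h1⟩ := step_options _ _ hstep
  simp only at h2 h1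
  subst h2; subst h1
  fin_cases hmem <;>
    first
      | decide
      | exact absurd htwo (by decide)
      | exact absurd hleg (by decide)

lemma step_Ee7_Ee8 (c2 : Config (Fin 5) 2) (hstep : StepOk G5 bb Ee8 c2)
    (htwo : TwoStepOk G5 bb Ee7 Ee8 c2) (hleg : LegalStep G5 Ee8 c2) :
    c2 = Ee9 := by
  obtain ⟨c2w, c2p⟩ := c2
  obtain ⟨π', hmem, h2, h1⟩ := step_options _ _ hstep
  simp only at h2 h1
  subst h2; subst h1
  fin_cases hmem <;>
    first
      | decide
      | exact absurd htwo (by decide)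
      | exact absurd hleg (by decide)

lemma step_Ee8_Ee9 (c2 : Config (Fin 5) 2) (hstep : StepOk G5 bb Ee9 c2)
    (htwo : TwoStepOk G5 bb Ee8 Ee9 c2) (hleg : LegalStep G5 Ee9 c2) :
    c2 = Ee10 := by
  obtain ⟨c2w, c2p⟩ := c2
  obtain ⟨π', hmem, h2, h1⟩ := step_options _ _ hstep
  simp only at h2 h1
  subst h2; subst h1
  fin_cases hmem <;>
    first
      | decide
      | exact absurd htwo (by decide)
      | exact absurd hleg (by decide)

lemma step_Ee9_Ee10 (c2 : Config (Fin 5) 2) (hstep : StepOk G5 bb Ee10 c2)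
    (htwo : TwoStepOk G5 bb Ee9 Ee10 c2) (hleg : LegalStep G5 Ee10 c2) :
    c2 = Ee11 := by
  obtain ⟨c2w, c2p⟩ := c2
  obtain ⟨π', hmem, h2, h1⟩ := step_options _ _ hstep
  simp only at h2 h1
  subst h2; subst h1
  fin_cases hmem <;>
    first
      | decide
      | exact absurd htwo (by decide)
      | exact absurd hleg (by decide)

/-! ### Trail manipulation helpers -/

lemma fin_mk_eq {n : ℕ} {i j : ℕ} (hi : i < n) (hj : j < n) (h : i = j) :
    (⟨i, hi⟩ : Fin n) = ⟨j, hj⟩ := by subst h; rfl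

lemma cfgc {n : ℕ} {α : Type*} (f : Fin n → α) {i j : ℕ} {hi : i < n} {hj : j < n}
    (h : i = j) : f ⟨i, hi⟩ = f ⟨j, hj⟩ := by subst h; rfl

section TrailHelpers

variable {w : Fin 5 → Fin 5 → ℕ} {len : ℕ} {cfg : Fin (len + 1) → Config (Fin 5) bb.m}

lemma trail_step (h : IsTrail G5 w bb len cfg) {j : ℕ} (hj : j < len) :
    StepOk G5 bb (cfg ⟨j, by omega⟩) (cfg ⟨j + 1, by omega⟩) := h.2.2.1 j hj

lemma trail_two (h : IsTrail G5 w bb len cfg) {j : ℕ} (hj1 : 1 ≤ j) (hj : j < len) :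
    TwoStepOk G5 bb (cfg ⟨j - 1, by omega⟩) (cfg ⟨j, by omega⟩) (cfg ⟨j + 1, by omega⟩) := by
  have h2 := h.2.2.2.2.1 (j - 1) (by omega)
  rwa [show cfg ⟨j - 1 + 1, by omega⟩ = cfg ⟨j, by omega⟩ from cfgc cfg (by omega),
    show cfg ⟨j - 1 + 2, by omega⟩ = cfg ⟨j + 1, by omega⟩ from cfgc cfg (by omega)] at h2

lemma trail_nonfinal (h : IsTrail G5 w bb len cfg) {j : ℕ} (hj : j < len) :
    ¬ IsFinal (cfg ⟨j, by omega⟩).2 := h.2.2.2.2.2 j hj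

lemma lt_of_nonfinal (h : IsTrail G5 w bb len cfg)
    (htot : IsFinal (cfg (Fin.last len)).2) (j : ℕ) (hj : j ≤ len)
    (hnf : ¬ IsFinal (cfg ⟨j, by omega⟩).2) : j < len := by
  rcases Nat.lt_or_ge j len with h' | h'
  · exact h'
  · exfalso
    have e : (⟨j, by omega⟩ : Fin (len + 1)) = Fin.last len := by
      rw [show Fin.last len = ⟨len, by omega⟩ from rfl]
      exact fin_mk_eq _ _ (by omega)
    rw [e] at hnf
    exact hnf htot

/-- Generic forced-step extraction. -/
lemma force {P : Config (Fin 5) 2 → Prop}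
    (h : IsLegalTrail G5 w bb len cfg) (htot : IsFinal (cfg (Fin.last len)).2)
    {X Y : Config (Fin 5) 2} (j : ℕ) (hj1 : 1 ≤ j) (hj : j ≤ len)
    (hx : cfg ⟨j - 1, by omega⟩ = X) (hy : cfg ⟨j, by omega⟩ = Y)
    (hnf : ¬ IsFinal Y.2)
    (st : ∀ c2, StepOk G5 bb Y c2 → TwoStepOk G5 bb X Y c2 → LegalStep G5 Y c2 → P c2) :
    ∃ _ : j < len, P (cfg ⟨j + 1, by omega⟩) := by
  have hlt : j < len := lt_of_nonfinal h.1 htot j hj (by rw [hy]; exact hnf)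
  have hs : StepOk G5 bb Y (cfg ⟨j + 1, by omega⟩) := by
    rw [← hy]; exact trail_step h.1 hlt
  have ht : TwoStepOk G5 bb X Y (cfg ⟨j + 1, by omega⟩) := by
    rw [← hx, ← hy]; exact trail_two h.1 hj1 hlt
  have hl : LegalStep G5 Y (cfg ⟨j + 1, by omega⟩) := by
    rw [← hy]; exact h.2 j hlt
  exact ⟨hlt, st _ hs ht hl⟩

lemma start_steps (h : IsLegalTrail G5 w₀ bb len cfg)
    (htot : IsFinal (cfg (Fin.last len)).2) :
    ∃ _ : 2 ≤ len, cfg ⟨0, by omega⟩ = D0 ∧ cfg ⟨1, by omega⟩ = D1 ∧ cfg ⟨2, by omega⟩ = D2 := by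
  have hc0 : cfg ⟨0, by omega⟩ = D0 := by
    rw [show (⟨0, by omega⟩ : Fin (len + 1)) = 0 from rfl]
    have h1 := h.1.1
    have h2 := h.1.2.1
    rw [initPos_bb] at h2
    exact Prod.ext h1 h2
  have h0lt : 0 < len := lt_of_nonfinal h.1 htot 0 (by omega) (by rw [hc0]; decide)
  have hc1 : cfg ⟨1, by omega⟩ = D1 := by
    have hs := trail_step h.1 h0lt
    have hl := h.2 0 h0lt
    have hmv := h.1.2.2.2.1 (by omega)
    rw [hc0] at hs hl
    have hmv' : ∀ (i : Fin bb.m) (n : Fin 5), D0.2 i = SolPos.node n →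
        ∃ n', (cfg ⟨1, by omega⟩).2 i = SolPos.node n' := by
      intro i n hn
      refine hmv i n ?_
      · rw [show (0 : Fin (len+1)) = ⟨0, by omega⟩ from rfl, hc0]; exact hn
    exact step_Dstart _ hs hmv' hl
  have h1lt : 1 < len := lt_of_nonfinal h.1 htot 1 (by omega) (by rw [hc1]; decide)
  have hc2 : cfg ⟨2, by omega⟩ = D2 :=
    (force h htot 1 (by omega) (by omega) hc0 hc1 (by decide) step_D0_D1).2
  exact ⟨by omega, hc0, hc1, hc2⟩

/-- One loop around the cycle: from pair (D2, D4) at position j. -/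
lemma loop_march (h : IsLegalTrail G5 w₀ bb len cfg)
    (htot : IsFinal (cfg (Fin.last len)).2) (j : ℕ) (hj1 : 1 ≤ j) (hj : j ≤ len)
    (hx : cfg ⟨j - 1, by omega⟩ = D2) (hy : cfg ⟨j, by omega⟩ = D4) :
    ∃ _ : j + 3 ≤ len, cfg ⟨j + 1, by omega⟩ = D5 ∧ cfg ⟨j + 2, by omega⟩ = D6 ∧
      cfg ⟨j + 3, by omega⟩ = D2 := by
  obtain ⟨l1, h5⟩ := force h htot j hj1 hj hx hy (by decide) step_D2_D4
  obtain ⟨l2, h6⟩ := force h htot (j + 1) (by omega) (by omega)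
    (show cfg ⟨j + 1 - 1, by omega⟩ = D4 from (cfgc cfg (by omega)).trans hy) h5
    (by decide) step_D4_D5
  obtain ⟨l3, h7⟩ := force h htot (j + 2) (by omega) (by omega)
    (show cfg ⟨j + 2 - 1, by omega⟩ = D5 from (cfgc cfg (by omega)).trans h5) h6
    (by decide) step_D5_D6
  exact ⟨by omega, h5, h6, h7⟩

/-- the exit tail: from pair (D2, D7) at position j. -/
lemma exit_march (h : IsLegalTrail G5 w₀ bb len cfg)
    (htot : IsFinal (cfg (Fin.last len)).2) (j : ℕ) (hj1 : 1 ≤ j) (hj : j ≤ len)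
    (hx : cfg ⟨j - 1, by omega⟩ = D2) (hy : cfg ⟨j, by omega⟩ = D7) :
    ∃ _ : len = j + 4, cfg ⟨j + 1, by omega⟩ = D8 ∧ cfg ⟨j + 2, by omega⟩ = D9 ∧
      cfg ⟨j + 3, by omega⟩ = D10 ∧ cfg ⟨j + 4, by omega⟩ = D11 := by
  obtain ⟨l1, h8⟩ := force h htot j hj1 hj hx hy (by decide) step_D2_D7
  obtain ⟨l2, h9⟩ := force h htot (j + 1) (by omega) (by omega)
    (show cfg ⟨j + 1 - 1, by omega⟩ = D7 from (cfgc cfg (by omega)).trans hy) h8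
    (by decide) step_D7_D8
  obtain ⟨l3, h10⟩ := force h htot (j + 2) (by omega) (by omega)
    (show cfg ⟨j + 2 - 1, by omega⟩ = D8 from (cfgc cfg (by omega)).trans h8) h9
    (by decide) step_D8_D9
  obtain ⟨l4, h11⟩ := force h htot (j + 3) (by omega) (by omega)
    (show cfg ⟨j + 3 - 1, by omega⟩ = D9 from (cfgc cfg (by omega)).trans h9) h10
    (by decide) step_D9_D10
  have hlen : len = j + 4 := by
    by_contra hne
    have hlt : j + 4 < len := by omega
    have hnf := trail_nonfinal h.1 hlt
    rw [h11] at hnf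
    exact hnf (by decide)
  exact ⟨hlen, h8, h9, h10, h11⟩

lemma dead_march (h : IsLegalTrail G5 w₀ bb len cfg)
    (htot : IsFinal (cfg (Fin.last len)).2) (j : ℕ) (hj1 : 1 ≤ j) (hj : j ≤ len)
    (hx : cfg ⟨j - 1, by omega⟩ = D2) (hy : cfg ⟨j, by omega⟩ = D3) : False :=
  (force h htot j hj1 hj hx hy (by decide) step_D2_D3).2

/-- From any occurrence of the pair (D6, D2) the trail ends at D11. -/
lemma reach_end (h : IsLegalTrail G5 w₀ bb len cfg)
    (htot : IsFinal (cfg (Fin.last len)).2) :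
    ∀ N j (hN : len - j ≤ N) (hj1 : 1 ≤ j) (hj : j ≤ len)
      (hx : cfg ⟨j - 1, by omega⟩ = D6) (hy : cfg ⟨j, by omega⟩ = D2),
      cfg (Fin.last len) = D11 := by
  intro N
  induction N with
  | zero =>
    intro j hN hj1 hj hx hy
    -- j = len, but D2 is not final
    have : j < len := lt_of_nonfinal h.1 htot j hj (by rw [hy]; decide)
    omega
  | succ N ih =>
    intro j hN hj1 hj hx hy
    obtain ⟨hlt, hbr⟩ := force h htot j hj1 hj hx hy (by decide) step_D6_D2
    rcases hbr with h7 | h4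
    · obtain ⟨hlen, _, _, _, h11⟩ := exit_march h htot (j + 1) (by omega) (by omega)
        (show cfg ⟨j + 1 - 1, by omega⟩ = D2 from (cfgc cfg (by omega)).trans hy) h7
      rw [show Fin.last len = ⟨len, by omega⟩ from rfl,
        show cfg ⟨len, by omega⟩ = cfg ⟨j + 1 + 4, by omega⟩ from cfgc cfg (by omega)]
      exact h11
    · obtain ⟨hle, h5, h6, h2'⟩ := loop_march h htot (j + 1) (by omega) (by omega)
        (show cfg ⟨j + 1 - 1, by omega⟩ = D2 from (cfgc cfg (by omega)).trans hy) h4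
      exact ih (j + 4) (by omega) (by omega) (by omega)
        (show cfg ⟨j + 4 - 1, by omega⟩ = D6 from (cfgc cfg (by omega)).trans h6) h2'

/-- Every total legal trail from w₀ ends in D11. -/
theorem final_w₀ {len : ℕ} {cfg : Fin (len + 1) → Config (Fin 5) bb.m}
    (h : IsTotalLegalTrail G5 w₀ bb len cfg) : cfg (Fin.last len) = D11 := by
  obtain ⟨hleg, htot⟩ := h
  obtain ⟨hlen2, hc0, hc1, hc2⟩ := start_steps hleg htot
  obtain ⟨hlt2, hbr⟩ := force hleg htot 2 (by omega) (by omega)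
    (show cfg ⟨2 - 1, by omega⟩ = D1 from (cfgc cfg (by omega)).trans hc1) hc2
    (by decide) step_D1_D2
  rcases hbr with h3 | h4
  · exact absurd h3 (fun h3 => dead_march hleg htot 3 (by omega) (by omega)
      (show cfg ⟨3 - 1, by omega⟩ = D2 from (cfgc cfg (by omega)).trans hc2) h3)
  · obtain ⟨hle, h5, h6, h2'⟩ := loop_march hleg htot 3 (by omega) (by omega)
      (show cfg ⟨3 - 1, by omega⟩ = D2 from (cfgc cfg (by omega)).trans hc2) h4
    exact reach_end hleg htot (len - 6) 6 (by omega) (by omega) (by omega)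
      (show cfg ⟨6 - 1, by omega⟩ = D6 from (cfgc cfg (by omega)).trans h6) h2'

end TrailHelpers

section TrailHelpersM

variable {w : Fin 5 → Fin 5 → ℕ} {len : ℕ} {cfg : Fin (len + 1) → Config (Fin 5) bb.m}

lemma start_stepsM (h : IsLegalTrail G5 w₁ bb len cfg)
    (htot : IsFinal (cfg (Fin.last len)).2) :
    ∃ _ : 2 ≤ len, cfg ⟨0, by omega⟩ = Ee0 ∧ cfg ⟨1, by omega⟩ = Ee1 ∧ cfg ⟨2, by omega⟩ = Ee2 := by
  have hc0 : cfg ⟨0, by omega⟩ = Ee0 := by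
    rw [show (⟨0, by omega⟩ : Fin (len + 1)) = 0 from rfl]
    have h1 := h.1.1
    have h2 := h.1.2.1
    rw [initPos_bb] at h2
    exact Prod.ext h1 h2
  have h0lt : 0 < len := lt_of_nonfinal h.1 htot 0 (by omega) (by rw [hc0]; decide)
  have hc1 : cfg ⟨1, by omega⟩ = Ee1 := by
    have hs := trail_step h.1 h0lt
    have hl := h.2 0 h0lt
    have hmv := h.1.2.2.2.1 (by omega)
    rw [hc0] at hs hl
    have hmv' : ∀ (i : Fin bb.m) (n : Fin 5), Ee0.2 i = SolPos.node n →
        ∃ n', (cfg ⟨1, by omega⟩).2 i = SolPos.node n' := by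
      intro i n hn
      refine hmv i n ?_
      · rw [show (0 : Fin (len+1)) = ⟨0, by omega⟩ from rfl, hc0]; exact hn
    exact step_Eestart _ hs hmv' hl
  have h1lt : 1 < len := lt_of_nonfinal h.1 htot 1 (by omega) (by rw [hc1]; decide)
  have hc2 : cfg ⟨2, by omega⟩ = Ee2 :=
    (force h htot 1 (by omega) (by omega) hc0 hc1 (by decide) step_Ee0_Ee1).2
  exact ⟨by omega, hc0, hc1, hc2⟩

/-- One loop around the cycle: from pair (Ee2, Ee3) at position j. -/
lemma loop_marchM (h : IsLegalTrail G5 w₁ bb len cfg)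
    (htot : IsFinal (cfg (Fin.last len)).2) (j : ℕ) (hj1 : 1 ≤ j) (hj : j ≤ len)
    (hx : cfg ⟨j - 1, by omega⟩ = Ee2) (hy : cfg ⟨j, by omega⟩ = Ee3) :
    ∃ _ : j + 3 ≤ len, cfg ⟨j + 1, by omega⟩ = Ee5 ∧ cfg ⟨j + 2, by omega⟩ = Ee6 ∧
      cfg ⟨j + 3, by omega⟩ = Ee2 := by
  obtain ⟨l1, h5⟩ := force h htot j hj1 hj hx hy (by decide) step_Ee2_Ee3
  obtain ⟨l2, h6⟩ := force h htot (j + 1) (by omega) (by omega)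
    (show cfg ⟨j + 1 - 1, by omega⟩ = Ee3 from (cfgc cfg (by omega)).trans hy) h5
    (by decide) step_Ee3_Ee5
  obtain ⟨l3, h7⟩ := force h htot (j + 2) (by omega) (by omega)
    (show cfg ⟨j + 2 - 1, by omega⟩ = Ee5 from (cfgc cfg (by omega)).trans h5) h6
    (by decide) step_Ee5_Ee6
  exact ⟨by omega, h5, h6, h7⟩

/-- the exit tail: from pair (Ee2, Ee7) at position j. -/
lemma exit_marchM (h : IsLegalTrail G5 w₁ bb len cfg)
    (htot : IsFinal (cfg (Fin.last len)).2) (j : ℕ) (hj1 : 1 ≤ j) (hj : j ≤ len)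
    (hx : cfg ⟨j - 1, by omega⟩ = Ee2) (hy : cfg ⟨j, by omega⟩ = Ee7) :
    ∃ _ : len = j + 4, cfg ⟨j + 1, by omega⟩ = Ee8 ∧ cfg ⟨j + 2, by omega⟩ = Ee9 ∧
      cfg ⟨j + 3, by omega⟩ = Ee10 ∧ cfg ⟨j + 4, by omega⟩ = Ee11 := by
  obtain ⟨l1, h8⟩ := force h htot j hj1 hj hx hy (by decide) step_Ee2_Ee7
  obtain ⟨l2, h9⟩ := force h htot (j + 1) (by omega) (by omega)
    (show cfg ⟨j + 1 - 1, by omega⟩ = Ee7 from (cfgc cfg (by omega)).trans hy) h8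
    (by decide) step_Ee7_Ee8
  obtain ⟨l3, h10⟩ := force h htot (j + 2) (by omega) (by omega)
    (show cfg ⟨j + 2 - 1, by omega⟩ = Ee8 from (cfgc cfg (by omega)).trans h8) h9
    (by decide) step_Ee8_Ee9
  obtain ⟨l4, h11⟩ := force h htot (j + 3) (by omega) (by omega)
    (show cfg ⟨j + 3 - 1, by omega⟩ = Ee9 from (cfgc cfg (by omega)).trans h9) h10
    (by decide) step_Ee9_Ee10
  have hlen : len = j + 4 := by
    by_contra hne
    have hlt : j + 4 < len := by omega
    have hnf := trail_nonfinal h.1 hlt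
    rw [h11] at hnf
    exact hnf (by decide)
  exact ⟨hlen, h8, h9, h10, h11⟩

lemma dead_marchM (h : IsLegalTrail G5 w₁ bb len cfg)
    (htot : IsFinal (cfg (Fin.last len)).2) (j : ℕ) (hj1 : 1 ≤ j) (hj : j ≤ len)
    (hx : cfg ⟨j - 1, by omega⟩ = Ee2) (hy : cfg ⟨j, by omega⟩ = Ee4) : False :=
  (force h htot j hj1 hj hx hy (by decide) step_Ee2_Ee4).2

/-- From any occurrence of the pair (Ee6, Ee2) the trail ends at Ee11. -/
lemma reach_endM (h : IsLegalTrail G5 w₁ bb len cfg)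
    (htot : IsFinal (cfg (Fin.last len)).2) :
    ∀ N j (hN : len - j ≤ N) (hj1 : 1 ≤ j) (hj : j ≤ len)
      (hx : cfg ⟨j - 1, by omega⟩ = Ee6) (hy : cfg ⟨j, by omega⟩ = Ee2),
      cfg (Fin.last len) = Ee11 := by
  intro N
  induction N with
  | zero =>
    intro j hN hj1 hj hx hy
    -- j = len, but Ee2 is not final
    have : j < len := lt_of_nonfinal h.1 htot j hj (by rw [hy]; decide)
    omega
  | succ N ih =>
    intro j hN hj1 hj hx hy
    obtain ⟨hlt, hbr⟩ := force h htot j hj1 hj hx hy (by decide) step_Ee6_Ee2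
    rcases hbr with h7 | h4
    · obtain ⟨hlen, _, _, _, h11⟩ := exit_marchM h htot (j + 1) (by omega) (by omega)
        (show cfg ⟨j + 1 - 1, by omega⟩ = Ee2 from (cfgc cfg (by omega)).trans hy) h7
      rw [show Fin.last len = ⟨len, by omega⟩ from rfl,
        show cfg ⟨len, by omega⟩ = cfg ⟨j + 1 + 4, by omega⟩ from cfgc cfg (by omega)]
      exact h11
    · obtain ⟨hle, h5, h6, h2'⟩ := loop_marchM h htot (j + 1) (by omega) (by omega)
        (show cfg ⟨j + 1 - 1, by omega⟩ = Ee2 from (cfgc cfg (by omega)).trans hy) h4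
      exact ih (j + 4) (by omega) (by omega) (by omega)
        (show cfg ⟨j + 4 - 1, by omega⟩ = Ee6 from (cfgc cfg (by omega)).trans h6) h2'

/-- Every total legal trail from w₁ ends in Ee11. -/
theorem final_w₁ {len : ℕ} {cfg : Fin (len + 1) → Config (Fin 5) bb.m}
    (h : IsTotalLegalTrail G5 w₁ bb len cfg) : cfg (Fin.last len) = Ee11 := by
  obtain ⟨hleg, htot⟩ := h
  obtain ⟨hlen2, hc0, hc1, hc2⟩ := start_stepsM hleg htot
  obtain ⟨hlt2, hbr⟩ := force hleg htot 2 (by omega) (by omega)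
    (show cfg ⟨2 - 1, by omega⟩ = Ee1 from (cfgc cfg (by omega)).trans hc1) hc2
    (by decide) step_Ee1_Ee2
  rcases hbr with h4 | h3
  · obtain ⟨hle, h5, h6, h2'⟩ := loop_marchM hleg htot 3 (by omega) (by omega)
      (show cfg ⟨3 - 1, by omega⟩ = Ee2 from (cfgc cfg (by omega)).trans hc2) h4
    exact reach_endM hleg htot (len - 6) 6 (by omega) (by omega) (by omega)
      (show cfg ⟨6 - 1, by omega⟩ = Ee6 from (cfgc cfg (by omega)).trans h6) h2'
  · exact absurd h3 (fun h3 => dead_marchM hleg htot 3 (by omega) (by omega)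
      (show cfg ⟨3 - 1, by omega⟩ = Ee2 from (cfgc cfg (by omega)).trans hc2) h3)


end TrailHelpersM

/-! ### Successor sets and perfect trails -/

section SCLayer

variable {V : Type} {G : SGraph V} {w : V → V → ℕ} {b : Burst V}

lemma snoc_lt {n : ℕ} {α : Type*} (f : Fin (n + 1) → α) (x : α) {j : ℕ}
    (h2 : j < n + 2) (h1 : j < n + 1) :
    (Fin.snoc f x : Fin (n + 2) → α) ⟨j, h2⟩ = f ⟨j, h1⟩ := by
  have : ((⟨j, h2⟩ : Fin (n + 2))) = Fin.castSucc ⟨j, h1⟩ := rfl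
  rw [this, Fin.snoc_castSucc]

lemma snoc_last' {n : ℕ} {α : Type*} (f : Fin (n + 1) → α) (x : α) (h : n + 1 < n + 2) :
    (Fin.snoc f x : Fin (n + 2) → α) ⟨n + 1, h⟩ = x := by
  have : ((⟨n + 1, h⟩ : Fin (n + 2))) = Fin.last (n + 1) := rfl
  rw [this, Fin.snoc_last]

lemma prefix_isTrail {len : ℕ} {cfg : Fin (len + 1) → Config V b.m}
    (ht : IsTrail G w b len cfg) (i : ℕ) (hi : i ≤ len) :
    IsTrail G w b i (prefixCfg cfg i hi) := by
  obtain ⟨h1, h2, h3, h4, h5, h6⟩ := ht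
  refine ⟨?_, ?_, ?_, ?_, ?_, ?_⟩
  · rw [show prefixCfg cfg i hi 0 = cfg 0 from congrArg cfg (Fin.ext (by simp))]
    exact h1
  · rw [show prefixCfg cfg i hi 0 = cfg 0 from congrArg cfg (Fin.ext (by simp))]
    exact h2
  · intro j hj
    exact h3 j (by omega)
  · intro hlen i' n hn
    refine h4 (by omega) i' n ?_
    · rwa [show prefixCfg cfg i hi 0 = cfg 0 from congrArg cfg (Fin.ext (by simp))] at hn
  · intro j hj
    exact h5 j (by omega)
  · intro j hj
    exact h6 j (by omega)

lemma isTrail_snoc_iff {len : ℕ} {cfg : Fin (len + 1) → Config V b.m}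
    (hlen : 1 ≤ len) (ht : IsTrail G w b len cfg) (x : Config V b.m) :
    IsTrail G w b (len + 1) (Fin.snoc cfg x) ↔
      StepOk G b (cfg ⟨len, by omega⟩) x ∧
      TwoStepOk G b (cfg ⟨len - 1, by omega⟩) (cfg ⟨len, by omega⟩) x ∧
      ¬ IsFinal (cfg ⟨len, by omega⟩).2 := by
  have e0 : (Fin.snoc cfg x : Fin (len + 2) → _) 0 = cfg 0 := by
    rw [show (0 : Fin (len + 2)) = ⟨0, by omega⟩ from rfl, snoc_lt cfg x _ (by omega)]
    exact congrArg cfg (Fin.ext (by simp))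
  constructor
  · intro H
    refine ⟨?_, ?_, ?_⟩
    · have hs := H.2.2.1 len (by omega)
      rwa [snoc_lt cfg x _ (by omega), snoc_last' cfg x] at hs
    · have hs := H.2.2.2.2.1 (len - 1) (by omega)
      rwa [snoc_lt cfg x _ (by omega), snoc_lt cfg x _ (by omega),
        show (⟨len - 1 + 2, by omega⟩ : Fin (len + 2)) = ⟨len + 1, by omega⟩
          from Fin.ext (by simp; omega),
        snoc_last' cfg x,
        show cfg ⟨len - 1 + 1, by omega⟩ = cfg ⟨len, by omega⟩ from cfgc cfg (by omega)] at hs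
    · have hs := H.2.2.2.2.2 len (by omega)
      rwa [snoc_lt cfg x _ (by omega)] at hs
  · rintro ⟨hstep, htwo, hnf⟩
    obtain ⟨h1, h2, h3, h4, h5, h6⟩ := ht
    refine ⟨by rw [e0]; exact h1, by rw [e0]; exact h2, ?_, ?_, ?_, ?_⟩
    · intro j hj
      rcases Nat.lt_or_ge j len with h' | h'
      · rw [snoc_lt cfg x _ (by omega), snoc_lt cfg x _ (by omega)]
        exact h3 j h'
      · have hj' : j = len := by omega
        subst hj'
        rw [snoc_lt cfg x _ (by omega), snoc_last' cfg x]
        exact hstep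
    · intro _ i' n hn
      rw [e0] at hn
      obtain ⟨n', hn'⟩ := h4 hlen i' n hn
      exact ⟨n', by rwa [snoc_lt cfg x _ (by omega)]⟩
    · intro j hj
      rcases Nat.lt_or_ge (j + 2) len with h' | h'
      · rw [snoc_lt cfg x _ (by omega), snoc_lt cfg x _ (by omega),
          snoc_lt cfg x _ (by omega)]
        exact h5 j (by omega)
      · rcases Nat.lt_or_ge j (len - 1) with h'' | h''
        · -- j + 2 = len
          have hj' : j + 2 = len := by omega
          rw [snoc_lt cfg x _ (by omega), snoc_lt cfg x _ (by omega),
            snoc_lt cfg x _ (by omega)]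
          exact h5 j (by omega)
        · -- j = len - 1
          have hj' : j = len - 1 := by omega
          subst hj'
          rw [snoc_lt cfg x _ (by omega), snoc_lt cfg x _ (by omega),
            show (⟨len - 1 + 2, by omega⟩ : Fin (len + 2)) = ⟨len + 1, by omega⟩
              from Fin.ext (by simp; omega),
            snoc_last' cfg x,
            show cfg ⟨len - 1 + 1, by omega⟩ = cfg ⟨len, by omega⟩ from cfgc cfg (by omega)]
          exact htwo
    · intro j hj
      rcases Nat.lt_or_ge j len with h' | h'
      · rw [snoc_lt cfg x _ (by omega)]
        exact h6 j h'
      · have hj' : j = len := by omega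
        subst hj'
        rw [snoc_lt cfg x _ (by omega)]
        exact hnf

lemma SC_eq {len len' : ℕ}
    {cfg : Fin (len + 1) → Config V b.m} {cfg' : Fin (len' + 1) → Config V b.m}
    (ht : IsTrail G w b len cfg) (ht' : IsTrail G w b len' cfg')
    (hl : 1 ≤ len) (hl' : 1 ≤ len')
    (e1 : cfg ⟨len - 1, by omega⟩ = cfg' ⟨len' - 1, by omega⟩)
    (e2 : cfg ⟨len, by omega⟩ = cfg' ⟨len', by omega⟩) :
    SC G w b len cfg = SC G w b len' cfg' := by
  ext π'
  simp only [SC, Set.mem_setOf_eq]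
  constructor
  · rintro ⟨wn, hw⟩
    refine ⟨wn, ?_⟩
    rw [isTrail_snoc_iff hl' ht']
    rw [isTrail_snoc_iff hl ht] at hw
    rw [← e1, ← e2]
    exact hw
  · rintro ⟨wn, hw⟩
    refine ⟨wn, ?_⟩
    rw [isTrail_snoc_iff hl ht]
    rw [isTrail_snoc_iff hl' ht'] at hw
    rw [e1, e2]
    exact hw

end SCLayer

/-! ### Classification of states and perfect trails -/

lemma result_w₀ {w'' : Fin 5 → Fin 5 → ℕ} (h : w'' ∈ ResultSet G5 w₀ bb) : w'' = w₁ := by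
  obtain ⟨len, cfg, htl, hw⟩ := h
  have hf := final_w₀ htl
  rw [← hw, hf]
  rfl

lemma result_w₁ {w'' : Fin 5 → Fin 5 → ℕ} (h : w'' ∈ ResultSet G5 w₁ bb) : w'' = w₀ := by
  obtain ⟨len, cfg, htl, hw⟩ := h
  have hf := final_w₁ htl
  rw [← hw, hf]
  rfl

lemma states_classify {w' : Fin 5 → Fin 5 → ℕ} (h : InStates G5 w₀ {bb} w') :
    w' = w₀ ∨ w' = w₁ := by
  induction h with
  | refl => exact Or.inl rfl
  | @step wa wb bx h hb hr ih =>
    have hbx : bx = bb := hb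
    subst hbx
    rcases ih with rfl | rfl
    · exact Or.inr (result_w₀ hr)
    · exact Or.inl (result_w₁ hr)

def TL0 : List (Config (Fin 5) 2) := [D0, D1, D2, D4, D5, D6, D2, D7, D8, D9, D10, D11]
def TL1 : List (Config (Fin 5) 2) := [Ee0, Ee1, Ee2, Ee3, Ee5, Ee6, Ee2, Ee7, Ee8, Ee9, Ee10, Ee11]

theorem perfect_march₀ {len : ℕ} {cfg : Fin (len + 1) → Config (Fin 5) bb.m}
    (h : IsTotalLegalTrail G5 w₀ bb len cfg) (hp : IsPerfect G5 w₀ bb len cfg) :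
    ∃ _ : len = 11, ∀ (j : ℕ) (hj : j ≤ len), cfg ⟨j, by omega⟩ = TL0.getD j D11 := by
  obtain ⟨hleg, htot⟩ := h
  obtain ⟨hlen2, hc0, hc1, hc2⟩ := start_steps hleg htot
  obtain ⟨hlt2, hbr⟩ := force hleg htot 2 (by omega) (by omega)
    (show cfg ⟨2 - 1, by omega⟩ = D1 from (cfgc cfg (by omega)).trans hc1) hc2
    (by decide) step_D1_D2
  rcases hbr with h3 | hc3
  · exact absurd h3 (fun h3 => dead_march hleg htot 3 (by omega) (by omega)
      (show cfg ⟨3 - 1, by omega⟩ = D2 from (cfgc cfg (by omega)).trans hc2) h3)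
  obtain ⟨hle6, hc4, hc5, hc6⟩ := loop_march hleg htot 3 (by omega) (by omega)
    (show cfg ⟨3 - 1, by omega⟩ = D2 from (cfgc cfg (by omega)).trans hc2) hc3
  obtain ⟨hlt6, hbr2⟩ := force hleg htot 6 (by omega) (by omega)
    (show cfg ⟨6 - 1, by omega⟩ = D6 from (cfgc cfg (by omega)).trans hc5)
    (show cfg ⟨6, by omega⟩ = D2 from (cfgc cfg (by omega)).trans hc6)
    (by decide) step_D6_D2
  rcases hbr2 with hc7 | hc7loop
  · -- exit branch: trail is T11
    obtain ⟨hlen, hc8, hc9, hc10, hc11⟩ := exit_march hleg htot 7 (by omega) (by omega)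
      (show cfg ⟨7 - 1, by omega⟩ = D2 from (cfgc cfg (by omega)).trans hc6) hc7
    refine ⟨by omega, ?_⟩
    intro j hj
    have hj11 : j ≤ 11 := by omega
    interval_cases j
    · exact (cfgc cfg (by omega)).trans hc0
    · exact (cfgc cfg (by omega)).trans hc1
    · exact (cfgc cfg (by omega)).trans hc2
    · exact (cfgc cfg (by omega)).trans hc3
    · exact (cfgc cfg (by omega)).trans hc4
    · exact (cfgc cfg (by omega)).trans hc5
    · exact (cfgc cfg (by omega)).trans hc6
    · exact (cfgc cfg (by omega)).trans hc7
    · exact (cfgc cfg (by omega)).trans hc8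
    · exact (cfgc cfg (by omega)).trans hc9
    · exact (cfgc cfg (by omega)).trans hc10
    · exact (cfgc cfg (by omega)).trans hc11
  · -- loop branch: contradicts perfectness
    exfalso
    obtain ⟨hle10, hc8, hc9, hc10⟩ := loop_march hleg htot 7 (by omega) (by omega)
      (show cfg ⟨7 - 1, by omega⟩ = D2 from (cfgc cfg (by omega)).trans hc6) hc7loop
    refine hp 6 10 (by omega) (by omega) ⟨?_, ?_⟩
    · exact ((cfgc cfg (by omega)).trans hc6).trans
        (((cfgc cfg (by omega)).trans hc10).symm)
    · refine SC_eq (prefix_isTrail hleg.1 6 (by omega)) (prefix_isTrail hleg.1 10 (by omega))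
        (by omega) (by omega) ?_ ?_
      · exact (show cfg ⟨5, by omega⟩ = cfg ⟨9, by omega⟩ from
          ((cfgc cfg (by omega)).trans hc5).trans (((cfgc cfg (by omega)).trans hc9).symm))
      · exact (show cfg ⟨6, by omega⟩ = cfg ⟨10, by omega⟩ from
          ((cfgc cfg (by omega)).trans hc6).trans (((cfgc cfg (by omega)).trans hc10).symm))

theorem unique₀ (t : TrailData (Fin 5) bb.m) (h : IsTotalLegalTrailD G5 w₀ bb t)
    (hp : IsPerfectD G5 w₀ bb t) : t = ⟨11, T11⟩ := by
  obtain ⟨len, cfg⟩ := t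
  have h' : IsTotalLegalTrail G5 w₀ bb len cfg := h
  have hp' : IsPerfect G5 w₀ bb len cfg := hp
  obtain ⟨hlen, hall⟩ := perfect_march₀ h' hp'
  subst hlen
  have hcfg : cfg = T11 := by
    funext j
    have hj := hall j.val (by omega)
    rw [show (⟨j.val, by omega⟩ : Fin 12) = j from Fin.ext rfl] at hj
    rw [hj]
    fin_cases j <;> rfl
  rw [hcfg]

def T11M : Fin 12 → Config (Fin 5) bb.m :=
  ![Ee0, Ee1, Ee2, Ee3, Ee5, Ee6, Ee2, Ee7, Ee8, Ee9, Ee10, Ee11]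

theorem perfect_march₁ {len : ℕ} {cfg : Fin (len + 1) → Config (Fin 5) bb.m}
    (h : IsTotalLegalTrail G5 w₁ bb len cfg) (hp : IsPerfect G5 w₁ bb len cfg) :
    ∃ _ : len = 11, ∀ (j : ℕ) (hj : j ≤ len), cfg ⟨j, by omega⟩ = TL1.getD j Ee11 := by
  obtain ⟨hleg, htot⟩ := h
  obtain ⟨hlen2, hc0, hc1, hc2⟩ := start_stepsM hleg htot
  obtain ⟨hlt2, hbr⟩ := force hleg htot 2 (by omega) (by omega)
    (show cfg ⟨2 - 1, by omega⟩ = Ee1 from (cfgc cfg (by omega)).trans hc1) hc2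
    (by decide) step_Ee1_Ee2
  have hc3 : cfg ⟨3, by omega⟩ = Ee3 := by
    rcases hbr with hc3 | h3
    · exact hc3
    · exact absurd h3 (fun h3 => dead_marchM hleg htot 3 (by omega) (by omega)
        (show cfg ⟨3 - 1, by omega⟩ = Ee2 from (cfgc cfg (by omega)).trans hc2) h3)
  obtain ⟨hle6, hc4, hc5, hc6⟩ := loop_marchM hleg htot 3 (by omega) (by omega)
    (show cfg ⟨3 - 1, by omega⟩ = Ee2 from (cfgc cfg (by omega)).trans hc2) hc3
  obtain ⟨hlt6, hbr2⟩ := force hleg htot 6 (by omega) (by omega)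
    (show cfg ⟨6 - 1, by omega⟩ = Ee6 from (cfgc cfg (by omega)).trans hc5)
    (show cfg ⟨6, by omega⟩ = Ee2 from (cfgc cfg (by omega)).trans hc6)
    (by decide) step_Ee6_Ee2
  rcases hbr2 with hc7 | hc7loop
  · -- exit branch: trail is T11M
    obtain ⟨hlen, hc8, hc9, hc10, hc11⟩ := exit_marchM hleg htot 7 (by omega) (by omega)
      (show cfg ⟨7 - 1, by omega⟩ = Ee2 from (cfgc cfg (by omega)).trans hc6) hc7
    refine ⟨by omega, ?_⟩
    intro j hj
    have hj11 : j ≤ 11 := by omega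
    interval_cases j
    · exact (cfgc cfg (by omega)).trans hc0
    · exact (cfgc cfg (by omega)).trans hc1
    · exact (cfgc cfg (by omega)).trans hc2
    · exact (cfgc cfg (by omega)).trans hc3
    · exact (cfgc cfg (by omega)).trans hc4
    · exact (cfgc cfg (by omega)).trans hc5
    · exact (cfgc cfg (by omega)).trans hc6
    · exact (cfgc cfg (by omega)).trans hc7
    · exact (cfgc cfg (by omega)).trans hc8
    · exact (cfgc cfg (by omega)).trans hc9
    · exact (cfgc cfg (by omega)).trans hc10
    · exact (cfgc cfg (by omega)).trans hc11
  · -- loop branch: contradicts perfectness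
    exfalso
    obtain ⟨hle10, hc8, hc9, hc10⟩ := loop_marchM hleg htot 7 (by omega) (by omega)
      (show cfg ⟨7 - 1, by omega⟩ = Ee2 from (cfgc cfg (by omega)).trans hc6) hc7loop
    refine hp 6 10 (by omega) (by omega) ⟨?_, ?_⟩
    · exact ((cfgc cfg (by omega)).trans hc6).trans
        (((cfgc cfg (by omega)).trans hc10).symm)
    · refine SC_eq (prefix_isTrail hleg.1 6 (by omega)) (prefix_isTrail hleg.1 10 (by omega))
        (by omega) (by omega) ?_ ?_
      · exact (show cfg ⟨5, by omega⟩ = cfg ⟨9, by omega⟩ from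
          ((cfgc cfg (by omega)).trans hc5).trans (((cfgc cfg (by omega)).trans hc9).symm))
      · exact (show cfg ⟨6, by omega⟩ = cfg ⟨10, by omega⟩ from
          ((cfgc cfg (by omega)).trans hc6).trans (((cfgc cfg (by omega)).trans hc10).symm))

theorem unique₁ (t : TrailData (Fin 5) bb.m) (h : IsTotalLegalTrailD G5 w₁ bb t)
    (hp : IsPerfectD G5 w₁ bb t) : t = ⟨11, T11M⟩ := by
  obtain ⟨len, cfg⟩ := t
  have h' : IsTotalLegalTrail G5 w₁ bb len cfg := h
  have hp' : IsPerfect G5 w₁ bb len cfg := hp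
  obtain ⟨hlen, hall⟩ := perfect_march₁ h' hp'
  subst hlen
  have hcfg : cfg = T11M := by
    funext j
    have hj := hall j.val (by omega)
    rw [show (⟨j.val, by omega⟩ : Fin 12) = j from Fin.ext rfl] at hj
    rw [hj]
    fin_cases j <;> rfl
  rw [hcfg]

/-! ### Final assembly -/

def T15 : Fin 16 → Config (Fin 5) bb.m :=
  ![D0, D1, D2, D4, D5, D6, D2, D4, D5, D6, D2, D7, D8, D9, D10, D11]

set_option maxRecDepth 100000 in
lemma T15_total : IsTotalLegalTrail G5 w₀ bb 15 T15 := by decide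

theorem perfectlyDet₅ : PerfectlyDet G5 w₀ {bb} := by
  intro w' hw bx hb t t' h1 hp1 h2 hp2
  have hbx : bx = bb := hb
  subst hbx
  rcases states_classify hw with rfl | rfl
  · rw [unique₀ t h1 hp1, unique₀ t' h2 hp2]
  · rw [unique₁ t h1 hp1, unique₁ t' h2 hp2]

theorem notStronglyDet₅ : ¬ StronglyDet G5 w₀ {bb} := by
  intro H
  have h := H w₀ InStates.refl bb rfl ⟨11, T11⟩ ⟨15, T15⟩ T11_total T15_total
  have h' : (11 : ℕ) = 15 := congrArg Sigma.fst h
  omega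

/-- There exist a soliton graph `G` and a set `B` of bursts for `G`
such that `A_B(G)` is perfectly deterministic but not strongly deterministic. -/
theorem exists_perfectlyDet_not_stronglyDet :
    ∃ (V : Type), Finite V ∧
      ∃ (G : SGraph V) (w : V → V → ℕ) (B : Set (Burst V)),
        IsSolitonGraph G w ∧ (∀ b ∈ B, IsBurstFor G b) ∧
        PerfectlyDet G w B ∧ ¬ StronglyDet G w B := by
  refine ⟨Fin 5, Finite.of_fintype _, G5, w₀, {bb}, solitonGraph_w₀, ?_,
    perfectlyDet₅, notStronglyDet₅⟩
  intro b hb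
  have hbx : b = bb := hb
  subst hbx
  intro i
  exact ⟨(exterior_iff 0).mpr rfl, (exterior_iff 0).mpr rfl⟩

end Soliton
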